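/- (Ideal form of the wheel conditions, first ideal.) For every k ≥ 3 and every d = (d1, …, dk) ∈ ℤ^k, the monomial shuffle element Sh_k(d) lies in the ideal of the Laurent polynomial ring R[z1^{±1}, …, zk^{±1}] generated by q1·z1 − z2 and q2·z2 − z3; that is, there exist Laurent polynomials a, b ∈ R[z1^{±1}, …, zk^{±1}] with Sh_k(d) = a·(q1·z1 − z2) + b·(q2·z2 − z3). -/

import Mathlib

open MvPolynomial Finset

noncomputable section
set_option maxHeartbeats 1000000
set_option synthInstance.maxHeartbeats 400000

/-- `Fk k` is the field `F_k = ℂ(q1, q2, z1, …, zk)`, realized as the fraction field of the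
polynomial ring `ℂ[q1, q2, z1, …, zk]`. -/
abbrev Fk (k : ℕ) : Type := FractionRing (MvPolynomial (Fin 2 ⊕ Fin k) ℂ)

/-- The indeterminate `q1` in `F_k`. -/
def q1F (k : ℕ) : Fk k := algebraMap (MvPolynomial (Fin 2 ⊕ Fin k) ℂ) (Fk k) (X (Sum.inl 0))

/-- The indeterminate `q2` in `F_k`. -/
def q2F (k : ℕ) : Fk k := algebraMap (MvPolynomial (Fin 2 ⊕ Fin k) ℂ) (Fk k) (X (Sum.inl 1))

/-- The indeterminates `z1, …, zk` in `F_k` (zero-indexed: `zF k i` is `z_{i+1}`). -/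
def zF (k : ℕ) (i : Fin k) : Fk k := algebraMap (MvPolynomial (Fin 2 ⊕ Fin k) ℂ) (Fk k) (X (Sum.inr i))

/-- `ω(x, y) = (x − q·y)(y − q1·x)(y − q2·x)/(x − y)`, where `q = q1·q2`. -/
def omegaF {K : Type*} [Field K] (q1 q2 x y : K) : K :=
  (x - q1 * q2 * y) * (y - q1 * x) * (y - q2 * x) / (x - y)

/-- The monomial shuffle element
`Sh_k(d) = Σ_{σ ∈ S_k} ∏_{i=1}^k z_{σ(i)}^{d_i} · ∏_{1 ≤ i < j ≤ k} ω(z_{σ(i)}, z_{σ(j)})`,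
as a rational expression in the values `z : Fin k → K`. -/
def Sh {K : Type*} [Field K] (q1 q2 : K) {k : ℕ} (z : Fin k → K) (d : Fin k → ℤ) : K :=
  ∑ σ : Equiv.Perm (Fin k), (∏ i, z (σ i) ^ d i) *
    ∏ p ∈ Finset.univ.filter (fun p : Fin k × Fin k => p.1 < p.2),
      omegaF q1 q2 (z (σ p.1)) (z (σ p.2))

/-- The Laurent polynomial subring `R[z1^{±1}, …, zk^{±1}]` of `K`, where
`R = ℂ[q1^{±1}, q2^{±1}]`: the subring generated by the complex constants,
`q1^{±1}`, `q2^{±1}` and the `z_i^{±1}`. -/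
def laurentSubring {K : Type*} [Field K] [Algebra ℂ K] (q1 q2 : K) {k : ℕ} (z : Fin k → K) :
    Subring K :=
  Subring.closure ((Set.range fun c : ℂ => algebraMap ℂ K c) ∪ {q1, q1⁻¹, q2, q2⁻¹} ∪
    Set.range z ∪ Set.range fun i => (z i)⁻¹)

/-- The `ℂ(q1,q2)`-algebra automorphism of `F_k` fixing `q1, q2` and sending `z_i ↦ z_{τ(i)}`. -/
def permAut (k : ℕ) (τ : Equiv.Perm (Fin k)) : Fk k ≃+* Fk k :=
  IsFractionRing.ringEquivOfRingEquiv
    (MvPolynomial.renameEquiv ℂ (Equiv.sumCongr (Equiv.refl (Fin 2)) τ)).toRingEquiv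


/-- pairs (i,j) with i < j -/
def pairsF (k : ℕ) : Finset (Fin k × Fin k) := Finset.univ.filter (fun p : Fin k × Fin k => p.1 < p.2)

lemma mem_pairsF {k : ℕ} {p : Fin k × Fin k} : p ∈ pairsF k ↔ p.1 < p.2 := by
  simp [pairsF]

lemma prod_pairsF {k : ℕ} {M : Type*} [CommMonoid M] (F : Fin k → Fin k → M) :
    ∏ p ∈ pairsF k, F p.1 p.2 = ∏ i, ∏ j ∈ Finset.Ioi i, F i j := by
  rw [Finset.prod_sigma']
  apply Finset.prod_nbij' (fun p => ⟨p.1, p.2⟩) (fun x => (x.1, x.2)) <;>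
    simp [pairsF, Finset.mem_sigma]

lemma prod_pairsF_perm {k : ℕ} {R : Type*} [CommRing R] (g : Fin k → R) (σ : Equiv.Perm (Fin k)) :
    ∏ p ∈ pairsF k, (g (σ p.1) - g (σ p.2)) =
      ((Equiv.Perm.sign σ : ℤ) : R) * ∏ p ∈ pairsF k, (g p.1 - g p.2) := by
  have key : ∀ h : Fin k → R, ∏ p ∈ pairsF k, (h p.1 - h p.2) =
      (-1 : R) ^ (pairsF k).card * (Matrix.vandermonde h).det := by
    intro h
    rw [Matrix.det_vandermonde, ← prod_pairsF (fun i j => h j - h i)]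
    rw [← Finset.prod_const (-1 : R), ← Finset.prod_mul_distrib]
    apply Finset.prod_congr rfl
    intro p _; ring
  have hsub : Matrix.vandermonde (fun i => g (σ i)) = (Matrix.vandermonde g).submatrix σ id := by
    ext i j; simp [Matrix.vandermonde, Matrix.submatrix]
  rw [key (fun i => g (σ i)), key g, hsub, Matrix.det_permute]
  ring

/-- product of pairwise-non-associated primes, each dividing n, divides n -/
lemma prod_primes_dvd' {α : Type*} [CommMonoidWithZero α] [IsCancelMulZero α] {ι : Type*} [DecidableEq ι]
    (s : Finset ι) (p : ι → α) (n : α)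
    (hp : ∀ i ∈ s, Prime (p i)) (hd : ∀ i ∈ s, p i ∣ n)
    (ha : ∀ i ∈ s, ∀ j ∈ s, i ≠ j → ¬ Associated (p i) (p j)) :
    (∏ i ∈ s, p i) ∣ n := by
  induction s using Finset.induction generalizing n with
  | empty => simp
  | @insert a s hx ih =>
    obtain ⟨m, hm⟩ := hd a (Finset.mem_insert_self a s)
    rw [Finset.prod_insert hx, hm]
    apply mul_dvd_mul_left
    refine ih m (fun i hi => hp i (Finset.mem_insert_of_mem hi)) ?_
      (fun i hi j hj hij => ha i (Finset.mem_insert_of_mem hi) j (Finset.mem_insert_of_mem hj) hij)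
    intro i hi
    have his : i ≠ a := fun h => hx (h ▸ hi)
    have hpi := hp i (Finset.mem_insert_of_mem hi)
    have : p i ∣ p a * m := hm ▸ hd i (Finset.mem_insert_of_mem hi)
    rcases hpi.dvd_or_dvd this with h | h
    · exact absurd (hpi.associated_of_dvd (hp a (Finset.mem_insert_self a s)) h)
        (ha i (Finset.mem_insert_of_mem hi) a (Finset.mem_insert_self a s) his)
    · exact h

variable {k : ℕ}

abbrev PP (k : ℕ) := MvPolynomial (Fin 2 ⊕ Fin k) ℂ

/-- p - aeval f p lies in the ideal generated by the X s - f s -/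
lemma sub_aeval_mem (f : (Fin 2 ⊕ Fin k) → PP k) (p : PP k) :
    p - aeval f p ∈ Ideal.span (Set.range fun s => (X s - f s : PP k)) := by
  induction p using MvPolynomial.induction_on with
  | C a => simp
  | add p q hp hq =>
    have := Ideal.add_mem _ hp hq
    simpa [add_sub_add_comm] using this
  | mul_X p s hp =>
    have h1 : p * X s - aeval f (p * X s) =
        (p - aeval f p) * X s + aeval f p * (X s - f s) := by
      simp only [map_mul, aeval_X]; ring
    rw [h1]
    exact Ideal.add_mem _ (Ideal.mul_mem_right _ _ hp)
      (Ideal.mul_mem_left _ _ (Ideal.subset_span ⟨s, rfl⟩))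

/-- the substitution X_(inr i) ↦ X_(inr j), all other variables fixed -/
def subst1 (i j : Fin k) : PP k →ₐ[ℂ] PP k :=
  aeval (fun s => if s = Sum.inr i then X (Sum.inr j) else X s)

lemma subst1_X_inr (i j a : Fin k) :
    subst1 i j (X (Sum.inr a)) = if a = i then X (Sum.inr j) else X (Sum.inr a) := by
  simp only [subst1, aeval_X]
  by_cases h : a = i <;> simp [h]

lemma subst1_X_inl (i j : Fin k) (t : Fin 2) :
    subst1 i j (X (Sum.inl t)) = X (Sum.inl t) := by
  simp [subst1]

lemma ker_subst1 (i j : Fin k) (hij : i ≠ j) :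
    RingHom.ker (subst1 i j).toRingHom =
      Ideal.span {(X (Sum.inr i) - X (Sum.inr j) : PP k)} := by
  apply le_antisymm
  · intro p hp
    have hp0 : aeval (fun s => if s = Sum.inr i then X (Sum.inr j) else X s) p = 0 := hp
    have h := sub_aeval_mem (fun s => if s = Sum.inr i then X (Sum.inr j) else X s) p
    rw [hp0, sub_zero] at h
    refine Ideal.span_le.mpr ?_ h
    rintro x ⟨s, rfl⟩
    by_cases hs : s = Sum.inr i
    · subst hs; simp only [if_pos rfl]
      exact Ideal.subset_span rfl
    · simp only [if_neg hs, sub_self]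
      exact Ideal.zero_mem _
  · rw [Ideal.span_le, Set.singleton_subset_iff]
    show subst1 i j (X (Sum.inr i) - X (Sum.inr j)) = 0
    rw [map_sub, subst1_X_inr, subst1_X_inr, if_pos rfl, if_neg (Ne.symm hij), sub_self]

lemma X_inr_sub_ne_zero {i j : Fin k} (hij : i ≠ j) :
    (X (Sum.inr i) - X (Sum.inr j) : PP k) ≠ 0 := by
  rw [sub_ne_zero]
  exact fun h => hij (Sum.inr.inj (X_injective h))

lemma prime_X_inr_sub {i j : Fin k} (hij : i ≠ j) :
    Prime (X (Sum.inr i) - X (Sum.inr j) : PP k) := by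
  rw [← Ideal.span_singleton_prime (X_inr_sub_ne_zero hij), ← ker_subst1 i j hij]
  exact RingHom.ker_isPrime _

lemma dvd_of_subst1_eq_zero {i j : Fin k} (hij : i ≠ j) {p : PP k}
    (h : subst1 i j p = 0) : (X (Sum.inr i) - X (Sum.inr j) : PP k) ∣ p := by
  rw [← Ideal.mem_span_singleton, ← ker_subst1 i j hij]
  exact h

/-- numerator of omega as a polynomial expression -/
def Nq (x y : PP k) : PP k :=
  (x - X (Sum.inl 0) * X (Sum.inl 1) * y) * (y - X (Sum.inl 0) * x) * (y - X (Sum.inl 1) * x)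

/-- one permutation term of the numerator -/
def Fg (d : Fin k → ℕ) (g : Fin k → PP k) (σ : Equiv.Perm (Fin k)) : PP k :=
  (∏ i, g (σ i) ^ d i) * ∏ p ∈ pairsF k, Nq (g (σ p.1)) (g (σ p.2))

/-- the full numerator -/
def AA (d : Fin k → ℕ) : PP k :=
  ∑ σ : Equiv.Perm (Fin k), ((Equiv.Perm.sign σ : ℤ) : PP k) *
    Fg d (fun i => X (Sum.inr i)) σ

/-- the Vandermonde denominator -/
def VV (k : ℕ) : PP k := ∏ p ∈ pairsF k, (X (Sum.inr p.1) - X (Sum.inr p.2))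

lemma map_Nq (ψ : PP k →ₐ[ℂ] PP k) (h0 : ψ (X (Sum.inl 0)) = X (Sum.inl 0))
    (h1 : ψ (X (Sum.inl 1)) = X (Sum.inl 1)) (x y : PP k) :
    ψ (Nq x y) = Nq (ψ x) (ψ y) := by
  simp only [Nq, map_mul, map_sub, h0, h1]

lemma map_Fg (ψ : PP k →ₐ[ℂ] PP k) (h0 : ψ (X (Sum.inl 0)) = X (Sum.inl 0))
    (h1 : ψ (X (Sum.inl 1)) = X (Sum.inl 1)) (d : Fin k → ℕ) (g : Fin k → PP k)
    (σ : Equiv.Perm (Fin k)) :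
    ψ (Fg d g σ) = Fg d (fun i => ψ (g i)) σ := by
  simp only [Fg, map_mul, map_prod, map_pow, map_Nq ψ h0 h1]

lemma Fg_comp (d : Fin k → ℕ) (g : Fin k → PP k) (τ σ : Equiv.Perm (Fin k))
    (hg : ∀ a, g (τ a) = g a) : Fg d g (τ * σ) = Fg d g σ := by
  simp only [Fg, Equiv.Perm.mul_apply, hg]

/-- alternating sums vanish when g is invariant under an odd permutation -/
lemma alt_sum_eq_zero (d : Fin k → ℕ) (g : Fin k → PP k) (τ : Equiv.Perm (Fin k))
    (hτ : Equiv.Perm.sign τ = -1) (hg : ∀ a, g (τ a) = g a) :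
    ∑ σ : Equiv.Perm (Fin k), ((Equiv.Perm.sign σ : ℤ) : PP k) * Fg d g σ = 0 := by
  set S := ∑ σ : Equiv.Perm (Fin k), ((Equiv.Perm.sign σ : ℤ) : PP k) * Fg d g σ with hS
  have h1 : S = ∑ σ : Equiv.Perm (Fin k),
      ((Equiv.Perm.sign (τ * σ) : ℤ) : PP k) * Fg d g (τ * σ) := by
    rw [hS]
    exact (Equiv.sum_comp (Equiv.mulLeft τ)
      (fun σ => ((Equiv.Perm.sign σ : ℤ) : PP k) * Fg d g σ)).symm
  have h2 : ∀ σ : Equiv.Perm (Fin k),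
      ((Equiv.Perm.sign (τ * σ) : ℤ) : PP k) * Fg d g (τ * σ) =
      -(((Equiv.Perm.sign σ : ℤ) : PP k) * Fg d g σ) := by
    intro σ
    rw [Fg_comp d g τ σ hg, map_mul, hτ]
    push_cast
    ring
  have h4 : S = -S :=
    h1.trans (by rw [Finset.sum_congr rfl (fun σ _ => h2 σ), Finset.sum_neg_distrib, ← hS])
  have h5 : (2 : PP k) * S = 0 := by rw [two_mul]; rw [eq_neg_iff_add_eq_zero] at h4; exact h4
  rcases mul_eq_zero.mp h5 with h | h
  · exact absurd h (by norm_num)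
  · exact h

lemma VV_dvd_AA (d : Fin k → ℕ) : VV k ∣ AA d := by
  apply prod_primes_dvd'
  · intro p hp
    exact prime_X_inr_sub (ne_of_lt (mem_pairsF.mp hp))
  · intro p hp
    apply dvd_of_subst1_eq_zero (ne_of_lt (mem_pairsF.mp hp))
    obtain ⟨i, j⟩ := p
    have hij : i ≠ j := ne_of_lt (mem_pairsF.mp hp)
    -- subst1 i j (AA d) = 0 by alternation with τ = swap i j
    have hmap : subst1 i j (AA d) = ∑ σ : Equiv.Perm (Fin k),
        ((Equiv.Perm.sign σ : ℤ) : PP k) *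
          Fg d (fun a => if a = i then X (Sum.inr j) else X (Sum.inr a)) σ := by
      simp only [AA, map_sum, map_mul, map_intCast]
      refine Finset.sum_congr rfl (fun σ _ => ?_)
      rw [map_Fg _ (subst1_X_inl i j 0) (subst1_X_inl i j 1)]
      have hg : (fun a => subst1 i j (X (Sum.inr a))) =
          fun a => if a = i then X (Sum.inr j) else (X (Sum.inr a) : PP k) :=
        funext (subst1_X_inr i j)
      rw [hg]
    rw [hmap]
    apply alt_sum_eq_zero d _ (Equiv.swap i j) (Equiv.Perm.sign_swap hij)
    intro a
    rcases eq_or_ne a i with rfl | hai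
    · simp [Equiv.swap_apply_left, hij.symm]
    · rcases eq_or_ne a j with rfl | haj
      · simp [Equiv.swap_apply_right, hij.symm]
      · rw [Equiv.swap_apply_of_ne_of_ne hai haj]
  · -- pairwise non-associated
    rintro ⟨i, j⟩ hij ⟨a, b⟩ hab hne hass
    have hij' : i < j := mem_pairsF.mp hij
    have hab' : a < b := mem_pairsF.mp hab
    have hdvd : (X (Sum.inr i) - X (Sum.inr j) : PP k) ∣ (X (Sum.inr a) - X (Sum.inr b)) :=
      hass.dvd
    have h0 : subst1 i j (X (Sum.inr a) - X (Sum.inr b)) = 0 := by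
      have hmem : (X (Sum.inr a) - X (Sum.inr b) : PP k) ∈
          Ideal.span {(X (Sum.inr i) - X (Sum.inr j) : PP k)} :=
        Ideal.mem_span_singleton.mpr hdvd
      rw [← ker_subst1 i j (ne_of_lt hij')] at hmem
      exact hmem
    rw [map_sub, subst1_X_inr, subst1_X_inr] at h0
    by_cases hbi : b = i
    · subst hbi
      have hai : a ≠ b := ne_of_lt hab'
      rw [if_neg hai, if_pos rfl] at h0
      exact X_inr_sub_ne_zero (ne_of_lt (hab'.trans hij')) h0
    · by_cases hai : a = i
      · subst hai
        rw [if_pos rfl, if_neg hbi] at h0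
        have : j = b := Sum.inr.inj (X_injective (sub_eq_zero.mp h0))
        exact hne (by rw [this])
      · rw [if_neg hai, if_neg hbi] at h0
        exact X_inr_sub_ne_zero (ne_of_lt hab') h0


section Wheel
variable {m : ℕ}

lemma fin01 : (0 : Fin (m+3)) ≠ 1 := by simp
lemma fin02 : (0 : Fin (m+3)) ≠ 2 := by rw [Fin.ne_iff_vne]; simp [Fin.val_two, Nat.mod_eq_of_lt (show 2 < m + 3 by omega)]
lemma fin12 : (1 : Fin (m+3)) ≠ 2 := by rw [Fin.ne_iff_vne]; simp [Fin.val_two, Nat.mod_eq_of_lt (show 2 < m + 3 by omega)]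

/-- the image of z_a under the wheel substitution -/
def gw (a : Fin (m+3)) : PP (m+3) :=
  if a = 0 then X (Sum.inr 0)
  else if a = 1 then X (Sum.inl 0) * X (Sum.inr 0)
  else if a = 2 then X (Sum.inl 0) * X (Sum.inl 1) * X (Sum.inr 0)
  else X (Sum.inr a)

/-- the wheel substitution z2 ↦ q1 z1, z3 ↦ q1 q2 z1 -/
def phiW : PP (m+3) →ₐ[ℂ] PP (m+3) :=
  aeval (Sum.elim (fun t => X (Sum.inl t)) gw)

lemma phiW_X_inl (t : Fin 2) : phiW (X (Sum.inl t) : PP (m+3)) = X (Sum.inl t) := by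
  simp [phiW]

lemma phiW_X_inr (a : Fin (m+3)) : phiW (X (Sum.inr a) : PP (m+3)) = gw a := by
  simp [phiW]

lemma gw_zero : gw (0 : Fin (m+3)) = X (Sum.inr 0) := by simp [gw]
lemma gw_one : gw (1 : Fin (m+3)) = X (Sum.inl 0) * X (Sum.inr 0) := by
  simp [gw, fin01.symm]
lemma gw_two : gw (2 : Fin (m+3)) = X (Sum.inl 0) * X (Sum.inl 1) * X (Sum.inr 0) := by
  simp [gw, fin02.symm, fin12.symm]

lemma Nq_gw_01 : Nq (gw (0 : Fin (m+3))) (gw 1) = 0 := by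
  rw [gw_zero, gw_one, Nq]; ring

lemma Nq_gw_12 : Nq (gw (1 : Fin (m+3))) (gw 2) = 0 := by
  rw [gw_one, gw_two, Nq]; ring

lemma Nq_gw_20 : Nq (gw (2 : Fin (m+3))) (gw 0) = 0 := by
  rw [gw_two, gw_zero, Nq]; ring

lemma Fg_gw_eq_zero (d : Fin (m+3) → ℕ) (σ : Equiv.Perm (Fin (m+3))) :
    Fg d gw σ = 0 := by
  suffices h : ∃ p ∈ pairsF (m+3), Nq (gw (σ p.1)) (gw (σ p.2)) = 0 by
    obtain ⟨p, hp, hz⟩ := h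
    rw [Fg, Finset.prod_eq_zero hp hz, mul_zero]
  set u := σ.symm 0 with hu
  set v := σ.symm 1 with hv
  set w := σ.symm 2 with hw
  have huv : u ≠ v := fun h => fin01 (σ.symm.injective h)
  have hvw : v ≠ w := fun h => fin12 (σ.symm.injective h)
  have hσu : σ u = 0 := Equiv.apply_symm_apply σ 0
  have hσv : σ v = 1 := Equiv.apply_symm_apply σ 1
  have hσw : σ w = 2 := Equiv.apply_symm_apply σ 2
  rcases lt_or_gt_of_ne huv with h1 | h1
  · exact ⟨(u, v), mem_pairsF.mpr h1, by rw [hσu, hσv, Nq_gw_01]⟩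
  · rcases lt_or_gt_of_ne hvw with h2 | h2
    · exact ⟨(v, w), mem_pairsF.mpr h2, by rw [hσv, hσw, Nq_gw_12]⟩
    · exact ⟨(w, u), mem_pairsF.mpr (h2.trans h1), by rw [hσw, hσu, Nq_gw_20]⟩

lemma phiW_AA (d : Fin (m+3) → ℕ) : phiW (AA d) = 0 := by
  rw [AA, map_sum]
  apply Finset.sum_eq_zero
  intro σ _
  rw [map_mul, map_intCast, map_Fg _ (phiW_X_inl 0) (phiW_X_inl 1)]
  have hg : (fun a => phiW (X (Sum.inr a) : PP (m+3))) = gw := funext phiW_X_inr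
  rw [hg, Fg_gw_eq_zero, mul_zero]

lemma gw_sub_ne_zero {a b : Fin (m+3)} (hab : a < b) : gw a - gw b ≠ 0 := by
  intro heq
  have hb0 : b ≠ 0 := fun h => by subst h; exact absurd hab (Fin.not_lt_zero a)
  set ev := MvPolynomial.eval
    (Sum.elim (fun t : Fin 2 => if t = 0 then (2:ℂ) else 3)
      (fun i : Fin (m+3) => if i = b then 5 else 1)) with hev
  have heval : ev (gw a) = ev (gw b) := by
    have h := congrArg ev heq
    rwa [map_sub, map_zero, sub_eq_zero] at h
  have e0 : ev (gw (0 : Fin (m+3))) = 1 := by simp [hev, gw_zero, Ne.symm hb0]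
  have e1 : ev (gw (1 : Fin (m+3))) = 2 := by
    simp [hev, gw_one, Ne.symm hb0]
  have e2 : ev (gw (2 : Fin (m+3))) = 6 := by
    simp [hev, gw_two, Ne.symm hb0]; norm_num
  have eo : ∀ c : Fin (m+3), c ≠ 0 → c ≠ 1 → c ≠ 2 →
      ev (gw c) = if c = b then 5 else 1 := by
    intro c h0 h1 h2
    simp [hev, gw, h0, h1, h2]
  by_cases hb1 : b = 1
  · subst hb1
    have ha : a = 0 := by
      have : (a:ℕ) < 1 := by simpa [Fin.lt_def] using hab
      exact Fin.ext (by simp only [Fin.val_zero]; omega)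
    subst ha
    rw [e0, e1] at heval; norm_num at heval
  · by_cases hb2 : b = 2
    · subst hb2
      have hav : (a : ℕ) < 2 := by simpa [Fin.lt_def, Fin.val_two, Nat.mod_eq_of_lt (show 2 < m + 3 by omega)] using hab
      have ha : a = 0 ∨ a = 1 := by
        have h' : (a:ℕ) = 0 ∨ (a:ℕ) = 1 := by omega
        rcases h' with h | h
        · exact Or.inl (Fin.ext (by simp only [Fin.val_zero]; omega))
        · exact Or.inr (Fin.ext (by simp only [Fin.val_one]; omega))
      rcases ha with rfl | rfl
      · rw [e0, e2] at heval; norm_num at heval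
      · rw [e1, e2] at heval; norm_num at heval
    · have eb : ev (gw b) = 5 := by rw [eo b hb0 hb1 hb2, if_pos rfl]
      by_cases ha0 : a = 0
      · subst ha0; rw [e0, eb] at heval; norm_num at heval
      · by_cases ha1 : a = 1
        · subst ha1; rw [e1, eb] at heval; norm_num at heval
        · by_cases ha2 : a = 2
          · subst ha2; rw [e2, eb] at heval; norm_num at heval
          · rw [eo a ha0 ha1 ha2, if_neg (ne_of_lt hab), eb] at heval
            norm_num at heval

lemma phiW_VV_ne_zero : phiW (VV (m+3)) ≠ 0 := by
  rw [VV, map_prod, Finset.prod_ne_zero_iff]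
  intro p hp
  rw [map_sub, phiW_X_inr, phiW_X_inr]
  exact gw_sub_ne_zero (mem_pairsF.mp hp)

end Wheel

section FieldSide
variable {k : ℕ}

lemma algMap_injective : Function.Injective (algebraMap (PP k) (Fk k)) :=
  IsFractionRing.injective (PP k) (Fk k)

lemma algMap_ne_zero {p : PP k} (hp : p ≠ 0) : algebraMap (PP k) (Fk k) p ≠ 0 := by
  intro h
  exact hp (algMap_injective (by rw [h, map_zero]))

lemma zF_ne_zero (i : Fin k) : zF k i ≠ 0 :=
  algMap_ne_zero (MvPolynomial.X_ne_zero _)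

lemma q1F_mem : q1F k ∈ laurentSubring (q1F k) (q2F k) (zF k) :=
  Subring.subset_closure (Or.inl (Or.inl (Or.inr (by simp))))

lemma q2F_mem : q2F k ∈ laurentSubring (q1F k) (q2F k) (zF k) :=
  Subring.subset_closure (Or.inl (Or.inl (Or.inr (by simp))))

lemma zF_mem (i : Fin k) : zF k i ∈ laurentSubring (q1F k) (q2F k) (zF k) :=
  Subring.subset_closure (Or.inl (Or.inr ⟨i, rfl⟩))

lemma zF_inv_mem (i : Fin k) : (zF k i)⁻¹ ∈ laurentSubring (q1F k) (q2F k) (zF k) :=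
  Subring.subset_closure (Or.inr ⟨i, rfl⟩)

lemma const_mem (a : ℂ) : algebraMap ℂ (Fk k) a ∈ laurentSubring (q1F k) (q2F k) (zF k) :=
  Subring.subset_closure (Or.inl (Or.inl (Or.inl ⟨a, rfl⟩)))

lemma poly_mem (p : PP k) :
    algebraMap (PP k) (Fk k) p ∈ laurentSubring (q1F k) (q2F k) (zF k) := by
  induction p using MvPolynomial.induction_on with
  | C a =>
    have h : algebraMap (PP k) (Fk k) (C a) = algebraMap ℂ (Fk k) a := by
      rw [IsScalarTower.algebraMap_apply ℂ (PP k) (Fk k) a]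
      rfl
    rw [h]; exact const_mem a
  | add p q hp hq => rw [map_add]; exact add_mem hp hq
  | mul_X p s hp =>
    rw [map_mul]
    refine mul_mem hp ?_
    cases s with
    | inl t =>
      fin_cases t
      · exact q1F_mem
      · exact q2F_mem
    | inr i => exact zF_mem i

/-- the key identity: `Sh` of an integer vector `d = n - M` equals
`(∏ z)^{-M}` times the image of the polynomial `B = AA n / VV`. -/
lemma Sh_eq_poly (d : Fin k → ℤ) (M : ℕ) (n : Fin k → ℕ)
    (hn : ∀ i, (n i : ℤ) = d i + M) (B : PP k) (hB : AA n = VV k * B) :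
    Sh (q1F k) (q2F k) (zF k) d =
      (∏ i, zF k i ^ M)⁻¹ * algebraMap (PP k) (Fk k) B := by
  set ι := algebraMap (PP k) (Fk k) with hι
  have hfilter : (Finset.univ.filter (fun p : Fin k × Fin k => p.1 < p.2)) = pairsF k := rfl
  have hVne : ι (VV k) ≠ 0 := by
    apply algMap_ne_zero
    rw [VV]
    rw [Finset.prod_ne_zero_iff]
    exact fun p hp => X_inr_sub_ne_zero (ne_of_lt (mem_pairsF.mp hp))
  have hterm : ∀ σ : Equiv.Perm (Fin k),
      (∏ i, zF k (σ i) ^ d i) *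
        ∏ p ∈ pairsF k, omegaF (q1F k) (q2F k) (zF k (σ p.1)) (zF k (σ p.2)) =
      (∏ i, zF k i ^ M)⁻¹ * (ι (VV k))⁻¹ *
        ι (((Equiv.Perm.sign σ : ℤ) : PP k) * Fg n (fun i => X (Sum.inr i)) σ) := by
    intro σ
    set e : Fk k := ((Equiv.Perm.sign σ : ℤ) : Fk k) with hedef
    have he : e * e = 1 := by
      rcases Int.units_eq_one_or (Equiv.Perm.sign σ) with h | h <;>
        rw [hedef, h] <;> norm_num
    have he' : e⁻¹ = e := inv_eq_of_mul_eq_one_right he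
    -- the power part
    have hA : (∏ i, zF k (σ i) ^ d i) =
        ι (∏ i, X (Sum.inr (σ i)) ^ n i) / ∏ i, zF k i ^ M := by
      have h1 : ∀ i : Fin k, zF k (σ i) ^ d i =
          zF k (σ i) ^ (n i : ℤ) / zF k (σ i) ^ (M : ℤ) := by
        intro i
        rw [← zpow_sub₀ (zF_ne_zero (σ i))]
        congr 1
        have := hn i
        omega
      rw [Finset.prod_congr rfl (fun i _ => h1 i), Finset.prod_div_distrib]
      congr 1
      · rw [map_prod]
        exact Finset.prod_congr rfl (fun i _ => by rw [zpow_natCast, map_pow]; rfl)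
      · calc ∏ i, zF k (σ i) ^ (M : ℤ) = ∏ i, zF k (σ i) ^ M := by
              exact Finset.prod_congr rfl (fun i _ => zpow_natCast _ M)
          _ = ∏ i, zF k i ^ M := Equiv.prod_comp σ (fun i => zF k i ^ M)
    -- the omega part
    have hB2 : (∏ p ∈ pairsF k, omegaF (q1F k) (q2F k) (zF k (σ p.1)) (zF k (σ p.2))) =
        ι (∏ p ∈ pairsF k, Nq (X (Sum.inr (σ p.1))) (X (Sum.inr (σ p.2)))) /
          (e * ι (VV k)) := by
      have hD : (∏ p ∈ pairsF k, (zF k (σ p.1) - zF k (σ p.2))) = e * ι (VV k) := by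
        rw [prod_pairsF_perm (zF k) σ, VV, map_prod]
        congr 1
        exact Finset.prod_congr rfl (fun p _ => by rw [map_sub]; rfl)
      rw [← hD, map_prod, ← Finset.prod_div_distrib]
      refine Finset.prod_congr rfl (fun p _ => ?_)
      rw [omegaF, Nq]
      simp only [map_mul, map_sub]
      rfl
    rw [hA, hB2]
    simp only [map_mul, map_intCast, Fg, map_prod, map_pow, ← hedef]
    rw [div_eq_mul_inv, div_eq_mul_inv, mul_inv, he']
    ring
  show (∑ σ : Equiv.Perm (Fin k), (∏ i, zF k (σ i) ^ d i) *
      ∏ p ∈ Finset.univ.filter (fun p : Fin k × Fin k => p.1 < p.2),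
        omegaF (q1F k) (q2F k) (zF k (σ p.1)) (zF k (σ p.2))) = _
  rw [hfilter]
  rw [Finset.sum_congr rfl (fun σ _ => hterm σ), ← Finset.mul_sum, ← map_sum]
  rw [show (∑ σ : Equiv.Perm (Fin k), ((Equiv.Perm.sign σ : ℤ) : PP k) *
      Fg n (fun i => X (Sum.inr i)) σ) = AA n from rfl]
  rw [hB, map_mul, mul_assoc, inv_mul_cancel_left₀ hVne]

end FieldSide

/-- Ideal form of the wheel conditions, first ideal: for every `k ≥ 3` (written `k = m + 3`)
and `d ∈ ℤ^k`, there are Laurent polynomials `a, b ∈ R[z1^{±1}, …, zk^{±1}]` with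
`Sh_k(d) = a·(q1·z1 − z2) + b·(q2·z2 − z3)`. -/
theorem sh_mem_wheel_ideal_one (m : ℕ) (d : Fin (m + 3) → ℤ) :
    ∃ a b : Fk (m + 3),
      a ∈ laurentSubring (q1F (m + 3)) (q2F (m + 3)) (zF (m + 3)) ∧
      b ∈ laurentSubring (q1F (m + 3)) (q2F (m + 3)) (zF (m + 3)) ∧
      Sh (q1F (m + 3)) (q2F (m + 3)) (zF (m + 3)) d =
        a * (q1F (m + 3) * zF (m + 3) 0 - zF (m + 3) 1)
          + b * (q2F (m + 3) * zF (m + 3) 1 - zF (m + 3) 2) := by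
  classical
  set M : ℕ := Finset.univ.sup (fun i => (-(d i)).toNat) with hM
  set n : Fin (m + 3) → ℕ := fun i => (d i + M).toNat with hndef
  have hn : ∀ i, (n i : ℤ) = d i + M := by
    intro i
    have h1 : (-(d i)).toNat ≤ M := Finset.le_sup (f := fun i => (-(d i)).toNat) (Finset.mem_univ i)
    have h2 : (-(d i) : ℤ) ≤ ((-(d i)).toNat : ℤ) := Int.self_le_toNat _
    have h3 : ((-(d i)).toNat : ℤ) ≤ (M : ℤ) := by exact_mod_cast h1
    rw [hndef]
    rw [Int.toNat_of_nonneg (by omega)]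
  obtain ⟨B, hB⟩ := VV_dvd_AA (k := m + 3) n
  have hphiA : phiW (AA n) = 0 := phiW_AA n
  have hphiB : phiW B = 0 := by
    rw [hB, map_mul] at hphiA
    rcases mul_eq_zero.mp hphiA with h | h
    · exact absurd h phiW_VV_ne_zero
    · exact h
  -- B lies in the ideal generated by G1, G2
  set G1 : PP (m + 3) := X (Sum.inr 1) - X (Sum.inl 0) * X (Sum.inr 0) with hG1
  set G2 : PP (m + 3) := X (Sum.inr 2) - X (Sum.inl 0) * X (Sum.inl 1) * X (Sum.inr 0) with hG2
  have hBmem : B ∈ Ideal.span {G1, G2} := by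
    have h := sub_aeval_mem (Sum.elim (fun t => X (Sum.inl t)) gw) B
    have hphi : aeval (Sum.elim (fun t => (X (Sum.inl t) : PP (m + 3))) gw) B = 0 := hphiB
    rw [hphi, sub_zero] at h
    refine Ideal.span_le.mpr ?_ h
    rintro x ⟨s, rfl⟩
    cases s with
    | inl t => simp
    | inr a =>
      simp only [Sum.elim_inr]
      by_cases h0 : a = 0
      · subst h0; rw [gw_zero, sub_self]; exact Ideal.zero_mem _
      · by_cases h1 : a = 1
        · subst h1; rw [gw_one]
          exact Ideal.subset_span (Set.mem_insert _ _)
        · by_cases h2 : a = 2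
          · subst h2; rw [gw_two]
            exact Ideal.subset_span (Set.mem_insert_of_mem _ rfl)
          · rw [show gw a = X (Sum.inr a) from by simp [gw, h0, h1, h2], sub_self]
            exact Ideal.zero_mem _
  obtain ⟨c1, c2, hc⟩ := Ideal.mem_span_pair.mp hBmem
  set ι := algebraMap (PP (m + 3)) (Fk (m + 3)) with hι
  set Z : Fk (m + 3) := (∏ i, zF (m + 3) i ^ M)⁻¹ with hZ
  have hZmem : Z ∈ laurentSubring (q1F (m + 3)) (q2F (m + 3)) (zF (m + 3)) := by
    rw [hZ, ← Finset.prod_inv_distrib]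
    refine prod_mem (fun i _ => ?_)
    rw [← inv_pow]
    exact pow_mem (zF_inv_mem i) M
  refine ⟨Z * (-(ι c1) - q2F (m + 3) * (ι c2)), Z * (-(ι c2)), ?_, ?_, ?_⟩
  · exact mul_mem hZmem (sub_mem (neg_mem (poly_mem c1)) (mul_mem q2F_mem (poly_mem c2)))
  · exact mul_mem hZmem (neg_mem (poly_mem c2))
  · have hSh := Sh_eq_poly d M n hn B hB
    rw [hSh, ← hc]
    have hg1 : ι G1 = zF (m + 3) 1 - q1F (m + 3) * zF (m + 3) 0 := by
      rw [hG1, map_sub, map_mul]; rfl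
    have hg2 : ι G2 = zF (m + 3) 2 - q1F (m + 3) * q2F (m + 3) * zF (m + 3) 0 := by
      rw [hG2, map_sub, map_mul, map_mul]; rfl
    rw [map_add, map_mul, map_mul, hg1, hg2]
    ring

end
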